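/- With the notation of the previous statement, for any x ∈ ℝⁿ and ζ̄ = ∇V(Λ(x̄)), the inequality Π(x) − Π(x̄) ≥ ½ (x − x̄)ᵀ G(ζ̄) (x − x̄) + (G(ζ̄) x̄ − f)ᵀ (x − x̄) holds, where G(ζ̄) = Σ_k ζ̄_k A_k − C. -/

import Mathlib

open Matrix

private lemma sym_swap {n : ℕ} (M : Matrix (Fin n) (Fin n) ℝ) (hM : M.IsHermitian)
    (x y : Fin n → ℝ) : x ⬝ᵥ M *ᵥ y = y ⬝ᵥ M *ᵥ x := by
  have hT : Mᵀ = M := by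
    have := hM.eq
    simpa using this
  have hv : x ᵥ* M = M *ᵥ x := by
    conv_lhs => rw [← hT]
    rw [Matrix.vecMul_transpose]
  rw [Matrix.dotProduct_mulVec, hv, dotProduct_comm]

private lemma quad_ident {n : ℕ} (M : Matrix (Fin n) (Fin n) ℝ) (hM : M.IsHermitian)
    (x y : Fin n → ℝ) :
    (1 / 2 : ℝ) * ((x - y) ⬝ᵥ M *ᵥ (x - y)) + (M *ᵥ y) ⬝ᵥ (x - y) =
      (1 / 2 : ℝ) * (x ⬝ᵥ M *ᵥ x) - (1 / 2 : ℝ) * (y ⬝ᵥ M *ᵥ y) := by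
  rw [dotProduct_comm (M *ᵥ y)]
  simp only [Matrix.mulVec_sub, dotProduct_sub, sub_dotProduct,
    sym_swap M hM y x]
  ring

private lemma grad_ineq {m : ℕ} (V : (Fin m → ℝ) → ℝ) (hd : Differentiable ℝ V)
    (hc : ConvexOn ℝ Set.univ V) (a y : Fin m → ℝ) :
    fderiv ℝ V a (y - a) ≤ V y - V a := by
  set g : ℝ → ℝ := fun t => V (a + t • (y - a)) with hg
  have hgconv : ConvexOn ℝ Set.univ g := by
    have := hc.comp_affineMap (AffineMap.lineMap a y : ℝ →ᵃ[ℝ] (Fin m → ℝ))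
    have heq : (V ∘ (AffineMap.lineMap a y : ℝ →ᵃ[ℝ] (Fin m → ℝ))) = g := by
      funext t
      simp only [Function.comp_apply, AffineMap.lineMap_apply_module, g]
      congr 1
      module
    rw [heq] at this
    simpa using this
  have hline : HasDerivAt (fun t : ℝ => a + t • (y - a)) (y - a) 0 := by
    simpa using ((hasDerivAt_id (0:ℝ)).smul_const (y - a)).const_add a
  have hgd : HasDerivAt g (fderiv ℝ V a (y - a)) 0 := by
    have h0 : a + (0:ℝ) • (y - a) = a := by simp
    have := (hd (a + (0:ℝ) • (y - a))).hasFDerivAt.comp_hasDerivAt 0 hline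
    rw [h0] at this
    exact this
  have := hgconv.le_slope_of_hasDerivAt (Set.mem_univ 0) (Set.mem_univ 1) one_pos hgd
  simpa [slope_def_field, g] using this

/-- The Gao–Strang inequality: with `zb = ∇V(Λ(xb))` and `G(zb) = Σ_k zb_k A_k − C`,
`Pi(x) − Pi(xb) ≥ ½(x−xb)ᵀG(zb)(x−xb) + (G(zb)xb − f)ᵀ(x−xb)` for all `x`. -/
theorem gao_strang_inequality (n m : ℕ)
    (A : Fin m → Matrix (Fin n) (Fin n) ℝ) (hA : ∀ k, (A k).IsHermitian)
    (C : Matrix (Fin n) (Fin n) ℝ) (hC : C.IsHermitian) (f : Fin n → ℝ)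
    (V : (Fin m → ℝ) → ℝ) (hVdiff : Differentiable ℝ V)
    (hVconv : ConvexOn ℝ Set.univ V)
    (Λ : (Fin n → ℝ) → (Fin m → ℝ))
    (hΛ : ∀ x k, Λ x k = (1 / 2 : ℝ) * (x ⬝ᵥ (A k).mulVec x))
    (Q : (Fin n → ℝ) → ℝ)
    (hQ : ∀ x, Q x = (1 / 2 : ℝ) * (x ⬝ᵥ C.mulVec x) + f ⬝ᵥ x)
    (Pi : (Fin n → ℝ) → ℝ) (hPi : ∀ x, Pi x = V (Λ x) - Q x)
    (xb : Fin n → ℝ) (zb : Fin m → ℝ)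
    (hgrad : ∀ v, fderiv ℝ V (Λ xb) v = zb ⬝ᵥ v)
    (G : Matrix (Fin n) (Fin n) ℝ) (hGdef : G = ∑ k, zb k • A k - C) :
    ∀ x, (1 / 2 : ℝ) * ((x - xb) ⬝ᵥ G.mulVec (x - xb)) +
        (G.mulVec xb - f) ⬝ᵥ (x - xb) ≤ Pi x - Pi xb := by
  intro x
  have hGH : G.IsHermitian := by
    rw [hGdef]
    have hTA : ∀ k, (A k)ᵀ = A k := fun k => by simpa using (hA k).eq
    have hTC : Cᵀ = C := by simpa using hC.eq
    show (∑ k, zb k • A k - C)ᴴ = _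
    simp [Matrix.transpose_sum, Matrix.transpose_smul, hTA, hTC]
  -- quadratic form of G
  have hGquad : ∀ v : Fin n → ℝ, v ⬝ᵥ G *ᵥ v =
      (∑ k, zb k * (v ⬝ᵥ (A k) *ᵥ v)) - v ⬝ᵥ C *ᵥ v := by
    intro v
    have hsum : (∑ k, zb k • A k) *ᵥ v = ∑ k, zb k • ((A k) *ᵥ v) := by
      ext i
      simp [Matrix.mulVec, dotProduct, Matrix.sum_apply, Finset.sum_mul, mul_assoc]
      rw [Finset.sum_comm]
      simp [Finset.mul_sum]
    have hd : v ⬝ᵥ (∑ k, zb k • ((A k) *ᵥ v)) = ∑ k, zb k * (v ⬝ᵥ (A k) *ᵥ v) := by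
      simp only [dotProduct, Finset.sum_apply, _root_.Pi.smul_apply, smul_eq_mul,
        Finset.mul_sum]
      rw [Finset.sum_comm]
      exact Finset.sum_congr rfl fun k _ => Finset.sum_congr rfl fun i _ => by ring
    rw [hGdef, Matrix.sub_mulVec, dotProduct_sub, hsum, hd]

  -- the LHS equals zb ⬝ᵥ (Λ x - Λ xb) - (Q x - Q xb)
  have hkey : (1 / 2 : ℝ) * ((x - xb) ⬝ᵥ G.mulVec (x - xb)) +
      (G.mulVec xb - f) ⬝ᵥ (x - xb) =
      zb ⬝ᵥ (Λ x - Λ xb) - (Q x - Q xb) := by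
    have h1 : (G.mulVec xb - f) ⬝ᵥ (x - xb) =
        (G *ᵥ xb) ⬝ᵥ (x - xb) - f ⬝ᵥ (x - xb) := by
      simp [sub_dotProduct]
      try ring
    rw [h1, ← add_sub_assoc, quad_ident G hGH x xb]
    have h2 : zb ⬝ᵥ (Λ x - Λ xb) = ∑ k, zb k * (Λ x k - Λ xb k) := by
      simp [dotProduct, _root_.Pi.sub_apply]
    rw [h2]
    simp only [hGquad, hΛ, hQ]
    have h3 : (∑ k, zb k * ((1:ℝ)/2 * (x ⬝ᵥ (A k) *ᵥ x) - 1/2 * (xb ⬝ᵥ (A k) *ᵥ xb)))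
        = 1/2 * (∑ k, zb k * (x ⬝ᵥ (A k) *ᵥ x))
          - 1/2 * (∑ k, zb k * (xb ⬝ᵥ (A k) *ᵥ xb)) := by
      rw [Finset.mul_sum, Finset.mul_sum, ← Finset.sum_sub_distrib]
      exact Finset.sum_congr rfl (fun k _ => by ring)
    rw [h3]
    simp only [dotProduct_sub]
    ring
  rw [hkey, hPi, hPi]
  have hconv : zb ⬝ᵥ (Λ x - Λ xb) ≤ V (Λ x) - V (Λ xb) := by
    have := grad_ineq V hVdiff hVconv (Λ xb) (Λ x)
    rwa [hgrad] at this
  linarith
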